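/- Suppose $f>0$, $f'>0$ on $[M,\infty)$, $F(u)=\int_u^\infty ds/f(s)$ is finite, and $f'(u)F(u)\leq Q$ for all $u\geq M$ where $Q>1$. Then for all $u\geq M$, $u \leq M + \frac{f(M)F(M)^{Q}}{Q-1}\big(F(u)^{1-Q} - F(M)^{1-Q}\big)$. -/

import Mathlib

open Real Filter Set Topology MeasureTheory

theorem stmt7 (M Q : ℝ) (hM : 0 < M) (hQ : 1 < Q) (f : ℝ → ℝ)
    (hf : ContDiffOn ℝ 1 f (Set.Ici M)) (hfpos : ∀ u ≥ M, 0 < f u)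
    (hf' : ∀ u ≥ M, 0 < deriv f u)
    (hint : ∀ u ≥ M, IntegrableOn (fun s => 1 / f s) (Set.Ioi u))
    (hb : ∀ u ≥ M, deriv f u * (∫ s in Set.Ioi u, 1 / f s) ≤ Q) :
    ∀ u ≥ M, u ≤ M + f M * (∫ s in Set.Ioi M, 1 / f s) ^ Q / (Q - 1) *
      ((∫ s in Set.Ioi u, 1 / f s) ^ (1 - Q) - (∫ s in Set.Ioi M, 1 / f s) ^ (1 - Q)) := by
  set F : ℝ → ℝ := fun u => ∫ s in Set.Ioi u, 1 / f s with hFdef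
  have hfc : ContinuousOn f (Ici M) := hf.continuousOn
  have hgc : ContinuousOn (fun s => 1 / f s) (Ici M) := fun x hx =>
    (continuousWithinAt_const.div (hfc x hx) (hfpos x hx).ne')
  -- positivity of F
  have hFpos : ∀ u ≥ M, 0 < F u := by
    intro u hu
    have hae : 0 ≤ᵐ[(volume : Measure ℝ).restrict (Ioi u)] fun s => 1 / f s := by
      filter_upwards [ae_restrict_mem measurableSet_Ioi] with s hs
      exact le_of_lt (one_div_pos.2 (hfpos s (hu.trans hs.le)))
    rw [hFdef]
    rw [setIntegral_pos_iff_support_of_nonneg_ae hae (hint u hu)]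
    have hsub : Ioi u ⊆ Function.support (fun s => 1 / f s) ∩ Ioi u := by
      intro s hs
      exact ⟨fun h => absurd h (ne_of_gt (one_div_pos.2 (hfpos s (hu.trans hs.le)))), hs⟩
    calc (0 : ENNReal) < volume (Ioi u) := by simp [Real.volume_Ioi]
    _ ≤ volume (Function.support (fun s => 1 / f s) ∩ Ioi u) := measure_mono hsub
  -- splitting identity
  have hsplit : ∀ u ≥ M, F u = F M - ∫ s in M..u, 1 / f s := by
    intro u hu
    have h1 : IntegrableOn (fun s => 1 / f s) (Ioc M u) :=
      (hint M le_rfl).mono_set Ioc_subset_Ioi_self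
    have hdisj : Disjoint (Ioc M u) (Ioi u) := Ioc_disjoint_Ioi le_rfl
    have hunion := MeasureTheory.setIntegral_union hdisj measurableSet_Ioi h1 (hint u hu)
    rw [Set.Ioc_union_Ioi_eq_Ioi hu] at hunion
    rw [intervalIntegral.integral_of_le hu]
    simp only [hFdef] at *
    linarith [hunion]
  -- interval integrability
  have hii : ∀ u ≥ M, IntervalIntegrable (fun s => 1 / f s) volume M u := by
    intro u hu
    exact (intervalIntegrable_iff_integrableOn_Ioc_of_le hu).2
      ((hint M le_rfl).mono_set Ioc_subset_Ioi_self)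
  -- derivative of F at interior points
  have hFd : ∀ u ∈ Ioi M, HasDerivAt F (-(1 / f u)) u := by
    intro u hu
    have hca : ∀ x ∈ Ioi M, ContinuousAt (fun s => 1 / f s) x := fun x hx =>
      hgc.continuousAt (Ici_mem_nhds hx)
    have hmeas := ContinuousAt.stronglyMeasurableAtFilter (E := ℝ) (μ := volume) isOpen_Ioi hca u hu
    have hd : HasDerivAt (fun x => F M - ∫ s in M..x, 1 / f s) (-(1 / f u)) u :=
      (intervalIntegral.integral_hasDerivAt_right (hii u (le_of_lt hu)) hmeas (hca u hu)).const_sub _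
    apply hd.congr_of_eventuallyEq
    filter_upwards [Ici_mem_nhds hu] with x hx
    exact hsplit x hx
  -- continuity of F on Ici M
  have hFcont : ContinuousOn F (Ici M) := by
    intro x hx
    rcases eq_or_lt_of_le (show M ≤ x from hx) with h | h
    · have hmeas : StronglyMeasurableAtFilter (fun s => 1 / f s) (𝓝[Ioi M] M) volume :=
        (hgc.mono Ioi_subset_Ici_self).stronglyMeasurableAtFilter_nhdsWithin measurableSet_Ioi M
      have hd : HasDerivWithinAt (fun x => F M - ∫ s in M..x, 1 / f s) (-(1 / f M)) (Ici M) M :=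
        (intervalIntegral.integral_hasDerivWithinAt_right (hii M le_rfl) hmeas
          ((hgc M Set.self_mem_Ici).mono Ioi_subset_Ici_self)).const_sub _
      have hcw := hd.continuousWithinAt
      rw [← h]
      apply hcw.congr (fun y hy => hsplit y hy)
      rw [intervalIntegral.integral_same]
      ring
    · exact ((hFd x h).continuousAt).continuousWithinAt
  -- f x * F x ^ Q antitone
  have hkey : ∀ u ≥ M, f u * F u ^ Q ≤ f M * F M ^ Q := by
    have hanti : AntitoneOn (fun u => f u * F u ^ Q) (Ici M) := by
      apply antitoneOn_of_deriv_nonpos (convex_Ici M)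
      · exact hfc.mul (hFcont.rpow_const (fun x hx => Or.inl (hFpos x hx).ne'))
      · rw [interior_Ici]
        intro x hx
        have hdf : HasDerivAt f (deriv f x) x :=
          (((hf.differentiableOn one_ne_zero) x (show M ≤ x from le_of_lt hx)).differentiableAt
            (Ici_mem_nhds hx)).hasDerivAt
        exact ((hdf.mul ((hFd x hx).rpow_const
          (Or.inl (hFpos x (le_of_lt hx)).ne'))).differentiableAt).differentiableWithinAt
      · rw [interior_Ici]
        intro x hx
        have hxM : M ≤ x := le_of_lt hx
        have hdf : HasDerivAt f (deriv f x) x :=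
          (((hf.differentiableOn one_ne_zero) x hxM).differentiableAt (Ici_mem_nhds hx)).hasDerivAt
        have hd : HasDerivAt (fun u => f u * F u ^ Q)
            (deriv f x * F x ^ Q + f x * (-(1 / f x) * Q * F x ^ (Q - 1))) x :=
          hdf.mul ((hFd x hx).rpow_const (Or.inl (hFpos x hxM).ne'))
        rw [hd.deriv]
        have hFx : (0 : ℝ) < F x := hFpos x hxM
        have hfx : (0 : ℝ) < f x := hfpos x hxM
        have hsplitpow : F x ^ Q = F x ^ (Q - 1) * F x := by
          rw [← Real.rpow_add_one hFx.ne']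
          ring_nf
        have h2 : f x * (-(1 / f x) * Q * F x ^ (Q - 1)) = -(Q * F x ^ (Q - 1)) := by
          field_simp
        rw [hsplitpow, h2]
        have hQb := hb x hxM
        have hpow : (0 : ℝ) ≤ F x ^ (Q - 1) := Real.rpow_nonneg hFx.le _
        calc deriv f x * (F x ^ (Q - 1) * F x) + -(Q * F x ^ (Q - 1))
            = (deriv f x * F x - Q) * F x ^ (Q - 1) := by ring
          _ ≤ 0 := mul_nonpos_of_nonpos_of_nonneg (by linarith) hpow
    intro u hu
    exact hanti (show M ≤ M from le_rfl) hu hu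
  -- the comparison function
  set C : ℝ := f M * F M ^ Q / (Q - 1) with hCdef
  have hCpos : 0 < C := by
    apply div_pos (mul_pos (hfpos M le_rfl) (Real.rpow_pos_of_pos (hFpos M le_rfl) _))
    linarith
  have hmono : MonotoneOn (fun u => M + C * (F u ^ (1 - Q) - F M ^ (1 - Q)) - u) (Ici M) := by
    apply monotoneOn_of_deriv_nonneg (convex_Ici M)
    · apply ContinuousOn.sub _ continuousOn_id
      exact continuousOn_const.add (continuousOn_const.mul
        ((hFcont.rpow_const (fun x hx => Or.inl (hFpos x hx).ne')).sub continuousOn_const))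
    · rw [interior_Ici]
      intro x hx
      have hd : HasDerivAt (fun u => M + C * (F u ^ (1 - Q) - F M ^ (1 - Q)) - u)
          (C * (-(1 / f x) * (1 - Q) * F x ^ (1 - Q - 1)) - 1) x := by
        apply HasDerivAt.sub _ (hasDerivAt_id x)
        apply HasDerivAt.const_add
        apply HasDerivAt.const_mul
        exact ((hFd x hx).rpow_const (Or.inl (hFpos x (le_of_lt hx)).ne')).sub_const _
      exact hd.differentiableAt.differentiableWithinAt
    · rw [interior_Ici]
      intro x hx
      have hxM : M ≤ x := le_of_lt hx
      have hd : HasDerivAt (fun u => M + C * (F u ^ (1 - Q) - F M ^ (1 - Q)) - u)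
          (C * (-(1 / f x) * (1 - Q) * F x ^ (1 - Q - 1)) - 1) x := by
        apply HasDerivAt.sub _ (hasDerivAt_id x)
        apply HasDerivAt.const_add
        apply HasDerivAt.const_mul
        exact ((hFd x hx).rpow_const (Or.inl (hFpos x hxM).ne')).sub_const _
      rw [hd.deriv]
      have hFx : (0 : ℝ) < F x := hFpos x hxM
      have hfx : (0 : ℝ) < f x := hfpos x hxM
      have hFM : (0 : ℝ) < F M := hFpos M le_rfl
      have hfM : (0 : ℝ) < f M := hfpos M le_rfl
      have hneg : F x ^ (1 - Q - 1) = (F x ^ Q)⁻¹ := by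
        rw [show (1 - Q - 1 : ℝ) = -Q by ring, Real.rpow_neg hFx.le]
      have hFxQ : (0 : ℝ) < F x ^ Q := Real.rpow_pos_of_pos hFx _
      have hQ1 : Q - 1 ≠ 0 := by linarith
      have heq : C * (-(1 / f x) * (1 - Q) * F x ^ (1 - Q - 1)) - 1
          = (f M * F M ^ Q) / (f x * F x ^ Q) - 1 := by
        rw [hneg, hCdef]
        field_simp
        ring
      rw [heq, sub_nonneg]
      exact (one_le_div (mul_pos hfx hFxQ)).2 (hkey x hxM)
  intro u hu
  have := hmono (le_refl M : M ∈ Ici M) (hu : u ∈ Ici M) hu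
  simp only [sub_self, mul_zero, add_zero] at this
  -- this : M - M ≤ M + C * (F u ^ (1-Q) - F M ^ (1-Q)) - u
  have hfin : M - M ≤ M + C * (F u ^ (1 - Q) - F M ^ (1 - Q)) - u := by
    simpa using this
  simp only [hCdef, hFdef] at hfin
  linarith
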